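/- Let B_s, B_d be n×n complex matrices and let λ ∈ ℂ be an eigenvalue of B_s whose algebraic multiplicity (multiplicity of λ as a root of the characteristic polynomial of B_s) equals its geometric multiplicity (dimension of the kernel of B_s − λ·I). Then the set { μ ∈ ℂ | ∃ x_s x_d : ℂⁿ, x_s ≠ 0 ∧ B_s·x_s = λ·x_s ∧ B_s·x_d + B_d·x_s = λ·x_d + μ·x_s } is finite; that is, the dual complex matrix B̂ = B_s + B_d·ε has only finitely many eigenvalues whose standard part equals λ. -/

import Mathlib

open Matrix Polynomial

lemma charpoly_comp_shift {n : ℕ} (B : Matrix (Fin n) (Fin n) ℂ) (lam : ℂ) :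
    (B.charpoly).comp (X + C lam) = (B - lam • 1).charpoly := by
  let f : ℂ[X] →+* ℂ[X] := eval₂RingHom (C : ℂ →+* ℂ[X]) (X + C lam)
  have hcomp : (B.charpoly).comp (X + C lam) = f B.charpoly := rfl
  rw [hcomp, Matrix.charpoly, Matrix.charpoly, RingHom.map_det]
  congr 1
  ext i j
  by_cases h : i = j
  · subst h
    simp [f, Matrix.charmatrix_apply_eq, Matrix.map_apply, Matrix.sub_apply,
      Matrix.smul_apply, Matrix.one_apply_eq, sub_add_eq_sub_sub]
    ring
  · simp [f, Matrix.charmatrix_apply_ne _ _ _ h, Matrix.map_apply, Matrix.sub_apply,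
      Matrix.smul_apply, Matrix.one_apply_ne h]

theorem stmt4 {n : ℕ} (Bs Bd : Matrix (Fin n) (Fin n) ℂ) (lam : ℂ)
    (hroot : Bs.charpoly.IsRoot lam)
    (hmult : Polynomial.rootMultiplicity lam Bs.charpoly =
      Module.finrank ℂ (LinearMap.ker (Bs - lam • 1).mulVecLin)) :
    {μ : ℂ | ∃ xs xd : Fin n → ℂ, xs ≠ 0 ∧ Bs.mulVec xs = lam • xs ∧
      Bs.mulVec xd + Bd.mulVec xs = lam • xd + μ • xs}.Finite := by
  classical
  set A : Module.End ℂ (Fin n → ℂ) := (Bs - lam • 1).mulVecLin with hA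
  -- charpoly of the endomorphism A equals the matrix charpoly
  have hAchar : LinearMap.charpoly A = (Bs - lam • 1).charpoly := by
    have h1 : (LinearMap.toMatrix (Pi.basisFun ℂ (Fin n)) (Pi.basisFun ℂ (Fin n)) A).charpoly
        = LinearMap.charpoly A := LinearMap.charpoly_toMatrix A _
    rw [← h1, LinearMap.toMatrix_eq_toMatrix']
    congr 1
    exact LinearMap.toMatrix'_toLin' (Bs - lam • 1)
  -- root multiplicity = finrank of maximal generalized eigenspace of A at 0
  have hmax : Module.finrank ℂ (A.maxGenEigenspace 0)
      = Polynomial.rootMultiplicity lam Bs.charpoly := by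
    rw [LinearMap.finrank_maxGenEigenspace_zero_eq, hAchar, ← charpoly_comp_shift,
      Polynomial.rootMultiplicity_eq_natTrailingDegree]
  -- the kernel of A equals the maximal generalized eigenspace
  have hker_le : LinearMap.ker A ≤ A.maxGenEigenspace 0 := by
    intro x hx
    rw [Module.End.mem_maxGenEigenspace]
    exact ⟨1, by simpa using hx⟩
  have hker_eq : LinearMap.ker A = A.maxGenEigenspace 0 := by
    apply Submodule.eq_of_le_of_finrank_le hker_le
    rw [hmax, hmult]
  -- ker A and range A are complementary
  have hdisj : Disjoint (LinearMap.ker A) (LinearMap.range A) := by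
    rw [Submodule.disjoint_def]
    rintro x hx ⟨y, rfl⟩
    have hy : y ∈ A.maxGenEigenspace 0 := by
      rw [Module.End.mem_maxGenEigenspace]
      exact ⟨2, by simpa [pow_two] using hx⟩
    rw [← hker_eq] at hy
    simpa using hy
  have hcompl : IsCompl (LinearMap.ker A) (LinearMap.range A) := by
    refine ⟨hdisj, ?_⟩
    rw [codisjoint_iff]
    apply Submodule.eq_top_of_finrank_eq
    have h1 := Submodule.finrank_sup_add_finrank_inf_eq
      (LinearMap.ker A) (LinearMap.range A)
    have h2 : LinearMap.ker A ⊓ LinearMap.range A = ⊥ := hdisj.eq_bot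
    rw [h2, finrank_bot, add_zero] at h1
    have h3 := LinearMap.finrank_range_add_finrank_ker A
    rw [h1, add_comm, h3]
  -- the projection onto ker A along range A
  set P : (Fin n → ℂ) →ₗ[ℂ] (Fin n → ℂ) :=
    (LinearMap.ker A).subtype ∘ₗ
      ((LinearMap.ker A).projectionOnto (LinearMap.range A) hcompl) with hP
  set L : Module.End ℂ (Fin n → ℂ) := P ∘ₗ Bd.mulVecLin with hL
  apply Set.Finite.subset (Module.End.finite_hasEigenvalue L)
  rintro μ ⟨xs, xd, hxs0, h1, h2⟩
  have hxsker : xs ∈ LinearMap.ker A := by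
    rw [LinearMap.mem_ker, hA]
    simp [Matrix.mulVecLin_apply, Matrix.sub_mulVec, Matrix.smul_mulVec,
      Matrix.one_mulVec, h1]
  have hPxs : P xs = xs := by
    rw [hP]
    simp only [LinearMap.coe_comp, Function.comp_apply, Submodule.coe_subtype]
    rw [Submodule.projectionOnto_apply_left hcompl ⟨xs, hxsker⟩]
  have hkey : Bd.mulVec xs = μ • xs - A xd := by
    have : A xd = Bs.mulVec xd - lam • xd := by
      rw [hA]
      simp [Matrix.mulVecLin_apply, Matrix.sub_mulVec, Matrix.smul_mulVec,
        Matrix.one_mulVec]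
    rw [this]
    have := h2
    abel_nf
    linear_combination (norm := abel_nf) h2 - h2 + h2
  have hPA : P (A xd) = 0 := by
    rw [hP]
    simp only [LinearMap.coe_comp, Function.comp_apply, Submodule.coe_subtype]
    rw [Submodule.projectionOnto_apply_right hcompl ⟨A xd, LinearMap.mem_range_self A xd⟩]
    rfl
  have hLxs : L xs = μ • xs := by
    rw [hL]
    simp only [LinearMap.coe_comp, Function.comp_apply, Matrix.mulVecLin_apply]
    rw [hkey, map_sub, LinearMap.map_smul, hPxs, hPA, sub_zero]
  exact Module.End.hasEigenvalue_of_hasEigenvector ⟨Module.End.mem_eigenspace_iff.mpr hLxs, hxs0⟩
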